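/- Let V and W be varieties of the same similarity type without nullary operation symbols, and let W be idempotent. If there exist binary terms f(x,y) and g(x,y) such that V satisfies the identities f(x,y) = x and g(x,y) = y, and W satisfies the identity f(x,y) = g(x,y), then the Mal'tsev product V ∘ W is a variety. -/

import Mathlib

structure Signature where
  symbols : Type
  arity : symbols → ℕ

structure Alg (S : Signature) where
  carrier : Type
  op : ∀ ω : S.symbols, (Fin (S.arity ω) → carrier) → carrier
  nonempty : Nonempty carrier

inductive Term (S : Signature) (X : Type) : Type
  | var : X → Term S X
  | app : ∀ ω : S.symbols, (Fin (S.arity ω) → Term S X) → Term S X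

def Term.eval {S : Signature} {X : Type} (A : Alg S) (env : X → A.carrier) :
    Term S X → A.carrier
  | .var x => env x
  | .app ω ts => A.op ω fun i => (ts i).eval A env

/-- The algebra `A` satisfies the identity `u = v`. -/
def Alg.sat {S : Signature} (A : Alg S) {X : Type} (u v : Term S X) : Prop :=
  ∀ env : X → A.carrier, u.eval A env = v.eval A env

/-- An identity: a pair of terms in the countably many variables `x₀, x₁, …`. -/
abbrev Ident (S : Signature) := Term S ℕ × Term S ℕ

/-- `A` lies in the variety axiomatized by the set of identities `E`. -/
def Alg.Models {S : Signature} (A : Alg S) (E : Set (Ident S)) : Prop :=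
  ∀ e ∈ E, A.sat e.1 e.2

/-- The identity `u = v` holds in the variety axiomatized by `E`. -/
def Conseq {S : Signature} (E : Set (Ident S)) {X : Type} (u v : Term S X) : Prop :=
  ∀ A : Alg S, A.Models E → A.sat u v

/-- `a` is an idempotent element of `A`. -/
def Alg.IsIdem {S : Signature} (A : Alg S) (a : A.carrier) : Prop :=
  ∀ ω : S.symbols, A.op ω (fun _ => a) = a

/-- `B` is (the universe of) a subalgebra of `A`. -/
def Alg.IsSubuniverse {S : Signature} (A : Alg S) (B : Set A.carrier) : Prop :=
  ∀ ω (a : Fin (S.arity ω) → A.carrier), (∀ i, a i ∈ B) → A.op ω a ∈ B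

/-- The subalgebra of `A` on a nonempty subuniverse `B`. -/
def Alg.subAlg {S : Signature} (A : Alg S) (B : Set A.carrier)
    (h : A.IsSubuniverse B) (hne : B.Nonempty) : Alg S where
  carrier := B
  op ω a := ⟨A.op ω fun i => (a i : A.carrier), h ω _ fun i => (a i).2⟩
  nonempty := hne.to_subtype

/-- A congruence of `A`: an equivalence relation compatible with all operations. -/
structure Congruence {S : Signature} (A : Alg S) where
  rel : A.carrier → A.carrier → Prop
  iseqv : Equivalence rel
  compat : ∀ ω (a b : Fin (S.arity ω) → A.carrier),
    (∀ i, rel (a i) (b i)) → rel (A.op ω a) (A.op ω b)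

def Congruence.setoid {S : Signature} {A : Alg S} (θ : Congruence A) :
    Setoid A.carrier := ⟨θ.rel, θ.iseqv⟩

/-- The quotient algebra `A/θ`. -/
noncomputable def Alg.quot {S : Signature} (A : Alg S) (θ : Congruence A) : Alg S where
  carrier := Quotient θ.setoid
  op ω q := Quotient.mk θ.setoid (A.op ω fun i => (q i).out)
  nonempty := A.nonempty.map (Quotient.mk θ.setoid)

/-- Membership in the Mal'tsev product of the varieties axiomatized by `V` and `W`:
`A` has a congruence `θ` with `A/θ` in (the variety of) `W` such that every
`θ`-class which is a subalgebra of `A` is an algebra in (the variety of) `V`. -/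
def InMaltsev {S : Signature} (V W : Set (Ident S)) (A : Alg S) : Prop :=
  ∃ θ : Congruence A, (A.quot θ).Models W ∧
    ∀ a : A.carrier, ∀ h : A.IsSubuniverse {b | θ.rel a b},
      (A.subAlg {b | θ.rel a b} h ⟨a, θ.iseqv.refl a⟩).Models V

/-- A class of algebras is a variety iff it is axiomatized by some set of identities. -/
def IsVarietyClass {S : Signature} (K : Alg S → Prop) : Prop :=
  ∃ E : Set (Ident S), ∀ A : Alg S, K A ↔ A.Models E


/-! ### Auxiliary machinery -/

namespace MPAux

variable {S : Signature}

/-- Substitution of terms for variables. -/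
def subst {X Y : Type} : Term S X → (X → Term S Y) → Term S Y
  | .var x, σ => σ x
  | .app ω ts, σ => .app ω fun i => subst (ts i) σ

theorem eval_subst {X Y : Type} (A : Alg S) (t : Term S X) (σ : X → Term S Y)
    (e : Y → A.carrier) :
    (subst t σ).eval A e = t.eval A fun x => (σ x).eval A e := by
  induction t with
  | var x => rfl
  | app ω ts ih =>
      show A.op ω _ = A.op ω _
      congr 1; funext i; exact ih i

/-- A bound on the variables occurring in a term over `ℕ`. -/
def bnd : Term S ℕ → ℕ
  | .var x => x + 1
  | .app _ ts => Finset.univ.sup fun i => bnd (ts i)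

theorem eval_congr_bnd (A : Alg S) (t : Term S ℕ) (e₁ e₂ : ℕ → A.carrier)
    (h : ∀ n < bnd t, e₁ n = e₂ n) : t.eval A e₁ = t.eval A e₂ := by
  induction t with
  | var x => exact h x (by simp [bnd])
  | app ω ts ih =>
      show A.op ω _ = A.op ω _
      congr 1; funext i
      exact ih i fun n hn =>
        h n (lt_of_lt_of_le hn (by exact Finset.le_sup (f := fun i => bnd (ts i)) (Finset.mem_univ i)))

theorem eval_quot (A : Alg S) (θ : Congruence A) {X : Type} (t : Term S X)
    (e : X → A.carrier) (q : X → Quotient θ.setoid)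
    (h : ∀ x, Quotient.mk θ.setoid (e x) = q x) :
    t.eval (A.quot θ) q = Quotient.mk θ.setoid (t.eval A e) := by
  induction t with
  | var x => exact (h x).symm
  | app ω ts ih =>
      show Quotient.mk θ.setoid (A.op ω fun i => ((ts i).eval (A.quot θ) q).out) = _
      apply Quotient.sound
      have key : ∀ i, θ.rel (((ts i).eval (A.quot θ) q).out) ((ts i).eval A e) := by
        intro i
        apply Quotient.exact (s := θ.setoid)
        exact (Quotient.out_eq (s := θ.setoid) _).trans (ih i)
      exact θ.compat ω _ _ key

theorem eval_sub (A : Alg S) (B : Set A.carrier) (h : A.IsSubuniverse B)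
    (hne : B.Nonempty) {X : Type} (t : Term S X)
    (env : X → (A.subAlg B h hne).carrier) :
    Subtype.val (t.eval (A.subAlg B h hne) env)
      = t.eval A fun x => Subtype.val (env x) := by
  induction t with
  | var x => rfl
  | app ω ts ih =>
      show A.op ω _ = A.op ω _
      congr 1; funext i; exact ih i

/-- A two-element environment. -/
def env2 {α : Type} (x y : α) : Fin 2 → α := fun i => if (i : ℕ) = 0 then x else y

/-- Promote a binary term to a term over `ℕ`. -/
def upN (t : Term S (Fin 2)) : Term S ℕ := subst t fun i => .var (i : ℕ)

/-- Substitute two terms into a binary term. -/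
def pairT (h : Term S (Fin 2)) (t s : Term S ℕ) : Term S ℕ :=
  subst h fun i => if (i : ℕ) = 0 then t else s

theorem eval_upN (A : Alg S) (t : Term S (Fin 2)) (e : ℕ → A.carrier) :
    (upN t).eval A e = t.eval A (fun i : Fin 2 => e (i : ℕ)) := by
  rw [upN, eval_subst]; rfl

theorem eval_pairT (A : Alg S) (h : Term S (Fin 2)) (t s : Term S ℕ) (e : ℕ → A.carrier) :
    (pairT h t s).eval A e = h.eval A (env2 (t.eval A e) (s.eval A e)) := by
  rw [pairT, eval_subst]
  congr 1; funext i
  by_cases hi : (i : ℕ) = 0 <;> simp [env2, hi]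

/-- The candidate congruence relation. -/
def Rel (A : Alg S) (f g : Term S (Fin 2)) (b c : A.carrier) : Prop :=
  f.eval A (env2 b c) = b ∧ g.eval A (env2 b c) = c

/-- The axiomatizing set of identities. -/
def Eset (V W : Set (Ident S)) : Set (Ident S) :=
  {pr | ∃ (p q : Term S ℕ) (σ : ℕ → Term S ℕ), Conseq V p q ∧ (∀ i j, Conseq W (σ i) (σ j)) ∧
        pr = (subst p σ, subst q σ)}

theorem conseq_of_mem {E : Set (Ident S)} {u v : Term S ℕ} (h : (u, v) ∈ E) :
    Conseq E u v := fun C hC env => hC (u, v) h env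

theorem conseq_refl (E : Set (Ident S)) {X : Type} (t : Term S X) : Conseq E t t :=
  fun _ _ _ => rfl

theorem conseq_symm {E : Set (Ident S)} {X : Type} {t s : Term S X}
    (h : Conseq E t s) : Conseq E s t := fun C hC env => (h C hC env).symm

/-- Key lemma: in a model of `Eset V W`, the evaluations of any pair of
`W`-equivalent terms are `Rel`-related. -/
theorem rel_of {V W : Set (Ident S)} {f g : Term S (Fin 2)}
    (hf : Conseq V f (Term.var 0)) (hg : Conseq V g (Term.var 1))
    {A : Alg S} (hA : A.Models (Eset V W))
    (t t' : Term S ℕ) (hW : Conseq W t t') (e : ℕ → A.carrier) :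
    Rel A f g (t.eval A e) (t'.eval A e) := by
  set σ : ℕ → Term S ℕ := fun n => if n = 0 then t else if n = 1 then t' else t with hσ
  have hcases : ∀ n, σ n = t ∨ σ n = t' := by
    intro n
    simp only [hσ]
    split
    · exact Or.inl rfl
    · split
      · exact Or.inr rfl
      · exact Or.inl rfl
  have hσW : ∀ i j, Conseq W (σ i) (σ j) := by
    intro i j
    rcases hcases i with h1 | h1 <;> rcases hcases j with h2 | h2 <;> rw [h1, h2]
    · exact conseq_refl W t
    · exact hW
    · exact conseq_symm hW
    · exact conseq_refl W t'
  have henv : (fun i : Fin 2 => (σ (i : ℕ)).eval A e)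
      = env2 (t.eval A e) (t'.eval A e) := by
    funext i
    fin_cases i <;> simp [hσ, env2]
  constructor
  · have hmem : (subst (upN f) σ, subst (Term.var 0) σ) ∈ Eset V W := by
      refine ⟨upN f, Term.var 0, σ, ?_, hσW, rfl⟩
      intro C hC env
      rw [eval_upN]
      exact hf C hC _
    have h2 := hA _ hmem e
    rw [eval_subst, eval_upN] at h2
    rw [henv] at h2
    simpa [subst, hσ] using h2
  · have hmem : (subst (upN g) σ, subst (Term.var 1) σ) ∈ Eset V W := by
      refine ⟨upN g, Term.var 1, σ, ?_, hσW, rfl⟩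
      intro C hC env
      rw [eval_upN]
      exact hg C hC _
    have h2 := hA _ hmem e
    rw [eval_subst, eval_upN] at h2
    rw [henv] at h2
    simpa [subst, hσ] using h2

/-- Iterated left-associated `f/g`-combinations. -/
def chainT (f g : Term S (Fin 2)) (dec : ℕ → Bool) : ℕ → Term S ℕ
  | 0 => .var 0
  | k + 1 => pairT (if dec k then f else g) (chainT f g dec k) (.var (k + 1))

theorem chain_W {W : Set (Ident S)} {f g : Term S (Fin 2)} (hfg : Conseq W f g)
    (dec dec' : ℕ → Bool) (k : ℕ) :
    Conseq W (chainT f g dec k) (chainT f g dec' k) := by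
  intro C hC env
  induction k with
  | zero => rfl
  | succ k ih =>
      rw [chainT, chainT, eval_pairT, eval_pairT, ih]
      cases hd : dec k <;> cases hd' : dec' k <;>
          simp only [if_true, if_false, Bool.false_eq_true, ite_true, ite_false] <;>
        first
          | rfl
          | exact hfg C hC _
          | exact (hfg C hC _).symm

theorem chain_eval {f g : Term S (Fin 2)} (A : Alg S) (c : ℕ → A.carrier)
    (hc : ∀ i j, Rel A f g (c i) (c j)) (n : ℕ) (k : ℕ) :
    (chainT f g (fun k => decide (k + 1 ≠ n)) k).eval A c
      = if k < n then c 0 else c n := by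
  induction k with
  | zero =>
      show c 0 = _
      rcases Nat.eq_zero_or_pos n with h | h
      · subst h; simp
      · rw [if_pos h]
  | succ k ih =>
      rw [chainT, eval_pairT, ih]
      by_cases hkn : k + 1 = n
      · have hd : (decide (k + 1 ≠ n)) = false := by simp [hkn]
        have hk : k < n := by omega
        have h1 : ¬ (k + 1 < n) := by omega
        rw [hd]
        simp only [Bool.false_eq_true, ite_false]
        rw [if_pos hk, if_neg h1, hkn]
        exact (hc 0 n).2
      · have hd : (decide (k + 1 ≠ n)) = true := by simp [hkn]
        rw [hd]
        simp only [ite_true]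
        by_cases hk : k < n
        · have h1 : k + 1 < n := by omega
          rw [if_pos hk, if_pos h1]
          exact (hc 0 (k + 1)).1
        · have h1 : ¬ (k + 1 < n) := by omega
          rw [if_neg hk, if_neg h1]
          exact (hc n (k + 1)).1

section RelProps

variable {V W : Set (Ident S)} {f g : Term S (Fin 2)} {A : Alg S}

theorem rel_refl (hf : Conseq V f (Term.var 0)) (hg : Conseq V g (Term.var 1))
    (hA : A.Models (Eset V W)) (b : A.carrier) : Rel A f g b b :=
  rel_of hf hg hA (.var 0) (.var 0) (conseq_refl W _) (fun _ => b)

theorem hfgN (hfg : Conseq W f g) : Conseq W (upN f : Term S ℕ) (upN g) := by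
  intro C hC env
  rw [eval_upN, eval_upN]
  exact hfg C hC _

theorem rel_symm (hf : Conseq V f (Term.var 0)) (hg : Conseq V g (Term.var 1))
    (hfg : Conseq W f g) (hA : A.Models (Eset V W))
    {b c : A.carrier} (h : Rel A f g b c) : Rel A f g c b := by
  have key := rel_of hf hg hA (upN g) (upN f) (conseq_symm (hfgN hfg))
    (fun n => if n = 0 then b else c)
  rw [eval_upN, eval_upN] at key
  have henv : (fun i : Fin 2 => (fun n : ℕ => if n = 0 then b else c) (i : ℕ))
      = env2 b c := by
    funext i; fin_cases i <;> simp [env2]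
  rw [henv, h.1, h.2] at key
  exact key

theorem rel_trans (hf : Conseq V f (Term.var 0)) (hg : Conseq V g (Term.var 1))
    (hfg : Conseq W f g) (hA : A.Models (Eset V W))
    {b c d : A.carrier} (h1 : Rel A f g b c) (h2 : Rel A f g c d) :
    Rel A f g b d := by
  classical
  set e : ℕ → A.carrier := fun n => if n = 0 then b else if n = 1 then c else d with he
  set t : Term S ℕ := pairT f (pairT f (.var 0) (.var 1)) (pairT f (.var 1) (.var 2))
    with hts
  set t' : Term S ℕ := pairT g (pairT g (.var 0) (.var 1)) (pairT g (.var 1) (.var 2))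
    with hts'
  have hW : Conseq W t t' := by
    intro C hC env
    simp only [hts, hts', eval_pairT, Term.eval]
    rw [← hfg C hC (env2 (env 0) (env 1)), ← hfg C hC (env2 (env 1) (env 2))]
    exact hfg C hC _
  have key := rel_of hf hg hA t t' hW e
  have e0 : e 0 = b := rfl
  have e1 : e 1 = c := rfl
  have e2 : e 2 = d := rfl
  have ht : t.eval A e = b := by
    simp only [hts, eval_pairT, Term.eval]
    rw [e0, e1, e2, h1.1, h2.1, h1.1]
  have ht' : t'.eval A e = d := by
    simp only [hts', eval_pairT, Term.eval]
    rw [e0, e1, e2, h1.2, h2.2, h2.2]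
  rw [ht, ht'] at key
  exact key

theorem rel_compat (hf : Conseq V f (Term.var 0)) (hg : Conseq V g (Term.var 1))
    (hfg : Conseq W f g) (hA : A.Models (Eset V W))
    (ω : S.symbols) (a b : Fin (S.arity ω) → A.carrier)
    (hab : ∀ i, Rel A f g (a i) (b i)) :
    Rel A f g (A.op ω a) (A.op ω b) := by
  classical
  set e : ℕ → A.carrier := fun n =>
    if hlt : n / 2 < S.arity ω then
      (if n % 2 = 0 then a ⟨n / 2, hlt⟩ else b ⟨n / 2, hlt⟩)
    else Classical.choice A.nonempty with he
  have ea : ∀ i : Fin (S.arity ω), e (2 * (i : ℕ)) = a i := by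
    intro i
    have h1 : 2 * (i : ℕ) / 2 = (i : ℕ) := by omega
    have h2 : 2 * (i : ℕ) % 2 = 0 := by omega
    simp only [he]
    rw [dif_pos (show 2 * (i : ℕ) / 2 < S.arity ω by rw [h1]; exact i.isLt), if_pos h2]
    exact congrArg a (Fin.ext h1)
  have eb : ∀ i : Fin (S.arity ω), e (2 * (i : ℕ) + 1) = b i := by
    intro i
    have h1 : (2 * (i : ℕ) + 1) / 2 = (i : ℕ) := by omega
    have h2 : ¬ ((2 * (i : ℕ) + 1) % 2 = 0) := by omega
    simp only [he]
    rw [dif_pos (show (2 * (i : ℕ) + 1) / 2 < S.arity ω by rw [h1]; exact i.isLt), if_neg h2]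
    exact congrArg b (Fin.ext h1)
  set t : Term S ℕ := .app ω fun i => pairT f (.var (2 * (i : ℕ))) (.var (2 * (i : ℕ) + 1))
    with hts
  set t' : Term S ℕ := .app ω fun i => pairT g (.var (2 * (i : ℕ))) (.var (2 * (i : ℕ) + 1))
    with hts'
  have hW : Conseq W t t' := by
    intro C hC env
    simp only [hts, hts', Term.eval]
    congr 1; funext i
    rw [eval_pairT, eval_pairT]
    exact hfg C hC _
  have key := rel_of hf hg hA t t' hW e
  have ht : t.eval A e = A.op ω a := by
    simp only [hts, Term.eval]
    congr 1; funext i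
    rw [eval_pairT]
    simp only [Term.eval]
    rw [ea i, eb i]
    exact (hab i).1
  have ht' : t'.eval A e = A.op ω b := by
    simp only [hts', Term.eval]
    congr 1; funext i
    rw [eval_pairT]
    simp only [Term.eval]
    rw [ea i, eb i]
    exact (hab i).2
  rw [ht, ht'] at key
  exact key

end RelProps

end MPAux

/-- Let `V` and `W` be varieties of the same type without
nullary operation symbols, with `W` idempotent. If there are binary terms
`f(x,y)` and `g(x,y)` such that `V ⊨ f(x,y) = x`, `V ⊨ g(x,y) = y` and
`W ⊨ f(x,y) = g(x,y)`, then the Mal'tsev product `V ∘ W` is a variety. -/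
theorem stmt_11 (S : Signature) (h0 : ∀ ω : S.symbols, 0 < S.arity ω)
    (V W : Set (Ident S))
    (hWidem : ∀ A : Alg S, A.Models W → ∀ a : A.carrier, A.IsIdem a)
    (f g : Term S (Fin 2))
    (hf : Conseq V f (Term.var 0))
    (hg : Conseq V g (Term.var 1))
    (hfg : Conseq W f g) :
    IsVarietyClass (InMaltsev V W) := by
  classical
  refine ⟨MPAux.Eset V W, fun A => ⟨?_, ?_⟩⟩
  · -- soundness: members of the Mal'tsev product satisfy all identities in `Eset V W`
    rintro ⟨θ, hq, hcl⟩ pr hpr e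
    obtain ⟨p, q, σ, hpq, hσ, rfl⟩ := hpr
    set d : ℕ → A.carrier := fun n => (σ n).eval A e with hd
    have hquot : ∀ n, (σ n).eval (A.quot θ) (fun m => Quotient.mk θ.setoid (e m))
        = Quotient.mk θ.setoid (d n) :=
      fun n => MPAux.eval_quot A θ (σ n) e _ (fun _ => rfl)
    have hrel : ∀ n, θ.rel (d 0) (d n) := by
      intro n
      apply Quotient.exact (s := θ.setoid)
      rw [← hquot 0, ← hquot n]
      exact hσ 0 n (A.quot θ) hq _
    have hsub : A.IsSubuniverse {b | θ.rel (d 0) b} := by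
      intro ω a ha
      have hidem := hWidem (A.quot θ) hq (Quotient.mk θ.setoid (d 0)) ω
      have r1 : θ.rel (A.op ω fun _ => (Quotient.mk θ.setoid (d 0)).out) (d 0) :=
        Quotient.exact (s := θ.setoid) hidem
      have r0 : θ.rel (d 0) ((Quotient.mk θ.setoid (d 0)).out) :=
        Quotient.exact (s := θ.setoid) (Quotient.out_eq _).symm
      have r2 : θ.rel (A.op ω a) (A.op ω fun _ => (Quotient.mk θ.setoid (d 0)).out) :=
        θ.compat ω _ _ fun i => θ.iseqv.trans (θ.iseqv.symm (ha i)) r0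
      exact θ.iseqv.symm (θ.iseqv.trans r2 r1)
    have hBV := hcl (d 0) hsub
    have hst := hpq _ hBV fun n => (⟨d n, hrel n⟩ : {b | θ.rel (d 0) b})
    have hval := congrArg Subtype.val hst
    erw [MPAux.eval_sub, MPAux.eval_sub] at hval
    rw [MPAux.eval_subst, MPAux.eval_subst]
    exact hval
  · -- completeness: every model of `Eset V W` lies in the Mal'tsev product
    intro hA
    set θ : Congruence A := ⟨MPAux.Rel A f g,
      ⟨MPAux.rel_refl hf hg hA,
       fun h => MPAux.rel_symm hf hg hfg hA h,
       fun h1 h2 => MPAux.rel_trans hf hg hfg hA h1 h2⟩,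
      fun ω a b hab => MPAux.rel_compat hf hg hfg hA ω a b hab⟩ with hθ
    refine ⟨θ, ?_, ?_⟩
    · rintro ⟨u, v⟩ hpr env
      show u.eval (A.quot θ) env = v.eval (A.quot θ) env
      rw [MPAux.eval_quot A θ u (fun n => (env n).out) env (fun n => Quotient.out_eq _),
        MPAux.eval_quot A θ v (fun n => (env n).out) env (fun n => Quotient.out_eq _)]
      apply Quotient.sound
      exact MPAux.rel_of hf hg hA u v (MPAux.conseq_of_mem hpr) _
    · intro a hsub
      rintro ⟨p, q⟩ hpr env
      set c : ℕ → A.carrier := fun n => (env n).val with hc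
      have hrelall : ∀ n, MPAux.Rel A f g a (c n) := fun n => (env n).2
      have hcc : ∀ i j, MPAux.Rel A f g (c i) (c j) := fun i j =>
        MPAux.rel_trans hf hg hfg hA
          (MPAux.rel_symm hf hg hfg hA (hrelall i)) (hrelall j)
      set N := max (MPAux.bnd p) (MPAux.bnd q) with hN
      set σ : ℕ → Term S ℕ := fun n => MPAux.chainT f g (fun k => decide (k + 1 ≠ n)) N
        with hσdef
      have hσW : ∀ i j, Conseq W (σ i) (σ j) := fun i j => MPAux.chain_W hfg _ _ N
      have hmem : (MPAux.subst p σ, MPAux.subst q σ) ∈ MPAux.Eset V W :=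
        ⟨p, q, σ, MPAux.conseq_of_mem hpr, hσW, rfl⟩
      have key := hA _ hmem c
      rw [MPAux.eval_subst, MPAux.eval_subst] at key
      have hσc : ∀ n, n < N → (σ n).eval A c = c n := by
        intro n hn
        rw [hσdef]
        rw [MPAux.chain_eval A c hcc n N, if_neg (by omega)]
      have h1 : p.eval A (fun n => (σ n).eval A c) = p.eval A c :=
        MPAux.eval_congr_bnd A p _ _ fun n hn =>
          hσc n (lt_of_lt_of_le hn (le_max_left _ _))
      have h2 : q.eval A (fun n => (σ n).eval A c) = q.eval A c :=
        MPAux.eval_congr_bnd A q _ _ fun n hn =>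
          hσc n (lt_of_lt_of_le hn (le_max_right _ _))
      have hAc : p.eval A c = q.eval A c := by rw [← h1, ← h2]; exact key
      apply Subtype.ext
      erw [MPAux.eval_sub, MPAux.eval_sub]
      exact hAc
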